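/- Suppose m ≥ 2 and n = 2m−3. Then there exists a non-zero polynomial g in n real variables z₁, …, zₙ with the following property: for any set of m points in the plane realising angles θ₁, …, θₙ (each strictly between 0 and π), one has g(sin²θ₁, sin²θ₂, …, sin²θₙ) = 0. -/

import Mathlib

open EuclideanGeometry

/-- A set `P` of points realises the angle `θ` if some three points of `P`
form this angle. -/
def Realises {d : ℕ} (P : Set (EuclideanSpace ℝ (Fin d))) (θ : ℝ) : Prop :=
  ∃ A B C : EuclideanSpace ℝ (Fin d),
    A ∈ P ∧ B ∈ P ∧ C ∈ P ∧ A ≠ B ∧ C ≠ B ∧ EuclideanGeometry.angle A B C = θ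

/-- The ray from `B` towards `A`, encoded by its vertex together with the
unit vector in its direction. -/
noncomputable def rayOf {d : ℕ} (B A : EuclideanSpace ℝ (Fin d)) :
    EuclideanSpace ℝ (Fin d) × EuclideanSpace ℝ (Fin d) :=
  (B, ‖A - B‖⁻¹ • (A - B))

/-- A tuple `θ` of angles is realised with multiplicity by `P` if each `θ i` is
realised at some vertex `B i` by points `A i, C i` of `P`, with the unordered
pairs of rays pairwise distinct. -/
def RealisesMult {d n : ℕ} (P : Set (EuclideanSpace ℝ (Fin d))) (θ : Fin n → ℝ) : Prop :=
  ∃ A B C : Fin n → EuclideanSpace ℝ (Fin d),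
    (∀ i, A i ∈ P ∧ B i ∈ P ∧ C i ∈ P ∧ A i ≠ B i ∧ C i ≠ B i ∧
      EuclideanGeometry.angle (A i) (B i) (C i) = θ i) ∧
    Function.Injective fun i =>
      ({rayOf (B i) (A i), rayOf (B i) (C i)} :
        Set (EuclideanSpace ℝ (Fin d) × EuclideanSpace ℝ (Fin d)))


open MvPolynomial

section
variable {σ ι : Type}
local notation "RR" => MvPolynomial σ ℝ
local notation "KK" => FractionRing (MvPolynomial σ ℝ)

lemma exists_annihilating [Fintype σ] [Fintype ι] [DecidableEq σ] [DecidableEq ι]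
    (hcard : Fintype.card σ < Fintype.card ι)
    (f : ι → FractionRing (MvPolynomial σ ℝ)) :
    ∃ g : MvPolynomial ι ℝ, g ≠ 0 ∧ aeval f g = 0 := by
  classical
  -- write f i = N i / D i
  have hsur : ∀ i, ∃ p : RR × RR, p.2 ≠ 0 ∧
      algebraMap RR KK p.1 / algebraMap RR KK p.2 = f i := by
    intro i
    obtain ⟨x, y, hy, h⟩ := IsFractionRing.div_surjective (A := RR) (f i)
    exact ⟨(x, y), nonZeroDivisors.ne_zero hy, h⟩
  choose ND hD hf using hsur
  set N : ι → RR := fun i => (ND i).1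
  set D : ι → RR := fun i => (ND i).2
  set k := Fintype.card σ
  set Kc := Fintype.card ι
  set δ := Finset.univ.sup (fun i => max (N i).totalDegree (D i).totalDegree)
  set t := (Kc * δ + 1) ^ k with ht
  have ht1 : 1 ≤ t := Nat.one_le_pow _ _ (Nat.succ_pos _)
  set Dd := Kc * (t * δ) with hDd
  -- the exponent boxes
  set E : Finset (ι →₀ ℕ) :=
    (Fintype.piFinset fun _ : ι => Finset.range (t + 1)).map
      ⟨Finsupp.equivFunOnFinite.symm, Equiv.injective _⟩ with hE
  set T : Finset (σ →₀ ℕ) :=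
    (Fintype.piFinset fun _ : σ => Finset.range (Dd + 1)).map
      ⟨Finsupp.equivFunOnFinite.symm, Equiv.injective _⟩ with hT
  have hmemE : ∀ e : ι →₀ ℕ, e ∈ E ↔ ∀ i, e i ≤ t := by
    intro e
    simp only [hE, Finset.mem_map, Fintype.mem_piFinset, Finset.mem_range]
    constructor
    · rintro ⟨v, hv, rfl⟩ i
      simpa [Nat.lt_succ_iff] using hv i
    · intro h
      exact ⟨e, fun i => Nat.lt_succ_of_le (h i), by simp⟩
  have hmemT : ∀ μ : σ →₀ ℕ, μ ∈ T ↔ ∀ s, μ s ≤ Dd := by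
    intro μ
    simp only [hT, Finset.mem_map, Fintype.mem_piFinset, Finset.mem_range]
    constructor
    · rintro ⟨v, hv, rfl⟩ s
      simpa [Nat.lt_succ_iff] using hv s
    · intro h
      exact ⟨μ, fun s => Nat.lt_succ_of_le (h s), by simp⟩
  have hcardE : E.card = (t + 1) ^ Kc := by
    simp [hE, Fintype.card_fin]
    rfl
  have hcardT : T.card = (Dd + 1) ^ k := by
    simp [hT]
    rfl
  -- the products
  set Q : (ι →₀ ℕ) → RR := fun e => ∏ i, N i ^ (e i) * D i ^ (t - e i) with hQ
  have hsup : ∀ i, max (N i).totalDegree (D i).totalDegree ≤ δ :=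
    fun i => Finset.le_sup (f := fun i => max (N i).totalDegree (D i).totalDegree)
      (Finset.mem_univ i)
  have hdegN : ∀ i, (N i).totalDegree ≤ δ :=
    fun i => le_trans (le_max_left _ _) (hsup i)
  have hdegD : ∀ i, (D i).totalDegree ≤ δ :=
    fun i => le_trans (le_max_right _ _) (hsup i)
  have hdegQ : ∀ e ∈ E, (Q e).totalDegree ≤ Dd := by
    intro e he
    refine le_trans (totalDegree_finset_prod _ _) ?_
    have he' := (hmemE e).1 he
    calc ∑ i : ι, (N i ^ e i * D i ^ (t - e i)).totalDegree
        ≤ ∑ _i : ι, t * δ := by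
          refine Finset.sum_le_sum fun i _ => ?_
          have h1 : (N i ^ e i).totalDegree ≤ e i * δ :=
            le_trans (totalDegree_pow _ _) (Nat.mul_le_mul_left _ (hdegN i))
          have h2 : (D i ^ (t - e i)).totalDegree ≤ (t - e i) * δ :=
            le_trans (totalDegree_pow _ _) (Nat.mul_le_mul_left _ (hdegD i))
          calc (N i ^ e i * D i ^ (t - e i)).totalDegree
              ≤ (N i ^ e i).totalDegree + (D i ^ (t - e i)).totalDegree :=
                totalDegree_mul _ _
            _ ≤ e i * δ + (t - e i) * δ := Nat.add_le_add h1 h2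
            _ = (e i + (t - e i)) * δ := (Nat.add_mul _ _ _).symm
            _ = t * δ := by rw [Nat.add_sub_cancel' (he' i)]
      _ = Kc * (t * δ) := by rw [Finset.sum_const, Finset.card_univ, smul_eq_mul]
      _ = Dd := hDd.symm
  have hsupp : ∀ e ∈ E, Q e ∈ restrictSupport ℝ (↑T : Set (σ →₀ ℕ)) := by
    intro e he
    rw [mem_restrictSupport_iff]
    intro μ hμ
    have h1 : (μ.sum fun _ n => n) ≤ Dd := le_trans (le_totalDegree hμ) (hdegQ e he)
    refine Finset.mem_coe.2 ((hmemT μ).2 fun s => le_trans ?_ h1)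
    by_cases hs : s ∈ μ.support
    · exact Finset.single_le_sum (f := fun a => μ a) (fun _ _ => Nat.zero_le _) hs
    · simp [Finsupp.notMem_support_iff.1 hs]
  -- the counting
  set W := restrictSupport ℝ (↑T : Set (σ →₀ ℕ))
  have finW : Module.Finite ℝ W := by
    have e := (basisRestrictSupport ℝ (↑T : Set (σ →₀ ℕ))).repr.trans
      (Finsupp.linearEquivFunOnFinite ℝ ℝ _)
    exact Module.Finite.equiv e.symm
  have hfinrank : Module.finrank ℝ W = T.card := by
    have e := (basisRestrictSupport ℝ (↑T : Set (σ →₀ ℕ))).repr.trans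
      (Finsupp.linearEquivFunOnFinite ℝ ℝ _)
    rw [e.finrank_eq, Module.finrank_fintype_fun_eq_card]
    simp
  set v : ↑E → W := fun e => ⟨Q e, hsupp e e.2⟩ with hv
  have hnotli : ¬ LinearIndependent ℝ v := by
    intro hli
    have := hli.fintype_card_le_finrank
    rw [hfinrank, Fintype.card_coe, hcardE, hcardT] at this
    -- arithmetic contradiction
    have harith : (Dd + 1) ^ k < (t + 1) ^ Kc := by
      calc (Dd + 1) ^ k ≤ ((Kc * δ + 1) * t) ^ k := by
            apply Nat.pow_le_pow_left
            rw [hDd]; nlinarith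
        _ = t * t ^ k := by rw [Nat.mul_pow, ← ht]
        _ < (t + 1) ^ (k + 1) := by
            calc t * t ^ k ≤ t * (t+1)^k := by
                  exact Nat.mul_le_mul_left _ (Nat.pow_le_pow_left (Nat.le_succ _) _)
              _ < (t + 1) * (t+1)^k :=
                  Nat.mul_lt_mul_of_lt_of_le (Nat.lt_succ_self _) le_rfl
                    (Nat.pow_pos (by omega))
              _ = (t + 1) ^ (k + 1) := by ring
        _ ≤ (t + 1) ^ Kc := Nat.pow_le_pow_right (by omega) (by omega)
    omega
  rw [Fintype.not_linearIndependent_iff] at hnotli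
  obtain ⟨c, hcsum, i₀, hi₀⟩ := hnotli
  have hQsum : ∑ e : ↑E, c e • Q (e : ι →₀ ℕ) = 0 := by
    have := congrArg (Submodule.subtype W) hcsum
    simpa [map_sum, hv] using this
  -- the polynomial g
  set g : MvPolynomial ι ℝ := ∑ e : ↑E, c e • monomial (e : ι →₀ ℕ) (1 : ℝ) with hg
  refine ⟨g, ?_, ?_⟩
  · intro h0
    apply hi₀
    have h1 : coeff (i₀ : ι →₀ ℕ) g = c i₀ := by
      rw [hg, coeff_sum, Finset.sum_eq_single i₀]
      · simp [coeff_smul, coeff_monomial]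
      · intro e _ hne
        have hee : (e : ι →₀ ℕ) ≠ (i₀ : ι →₀ ℕ) := fun h => hne (Subtype.ext h)
        simp [coeff_smul, coeff_monomial, hee]
      · simp
    rw [h0] at h1
    simpa using h1.symm
  · set φ : RR →ₐ[ℝ] KK := IsScalarTower.toAlgHom ℝ RR KK with hφ
    have hφ' : ∀ p : RR, φ p = algebraMap RR KK p := fun p => rfl
    have hDK : ∀ i, algebraMap RR KK (D i) ≠ 0 := fun i h =>
      hD i (IsFractionRing.injective RR KK (by rw [h, map_zero]))
    set Dfull : KK := ∏ i, algebraMap RR KK (D i) ^ t with hDfull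
    have hDfull0 : Dfull ≠ 0 := by
      rw [hDfull]
      exact Finset.prod_ne_zero_iff.2 fun i _ => pow_ne_zero _ (hDK i)
    have key : Dfull * aeval f g = 0 := by
      have hmain : Dfull * aeval f g = φ (∑ e : ↑E, c e • Q (e : ι →₀ ℕ)) := by
        rw [hg, map_sum, map_sum, Finset.mul_sum]
        refine Finset.sum_congr rfl fun e _ => ?_
        have he' := (hmemE (e : ι →₀ ℕ)).1 e.2
        rw [map_smul, map_smul, mul_smul_comm]
        congr 1
        have haev : aeval f (monomial (e : ι →₀ ℕ) (1 : ℝ)) = ∏ i, f i ^ (e : ι →₀ ℕ) i := by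
          rw [aeval_monomial, map_one, one_mul,
            Finsupp.prod_fintype _ _ (fun i => pow_zero _)]
        rw [haev, hφ']
        rw [show Q (e : ι →₀ ℕ) = ∏ i, N i ^ (e : ι →₀ ℕ) i * D i ^ (t - (e : ι →₀ ℕ) i) from rfl]
        rw [map_prod, hDfull, ← Finset.prod_mul_distrib]
        refine Finset.prod_congr rfl fun i _ => ?_
        rw [map_mul, map_pow, map_pow]
        have hfe : f i = algebraMap RR KK (N i) / algebraMap RR KK (D i) := (hf i).symm
        have h2 : algebraMap RR KK (D i) ^ t
            = algebraMap RR KK (D i) ^ (t - (e : ι →₀ ℕ) i) * algebraMap RR KK (D i) ^ ((e : ι →₀ ℕ) i) := by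
          rw [← pow_add, Nat.sub_add_cancel (he' i)]
        rw [hfe, div_pow, h2, mul_assoc,
          mul_comm (algebraMap RR KK (D i) ^ ((e : ι →₀ ℕ) i)),
          div_mul_cancel₀ _ (pow_ne_zero _ (hDK i)), mul_comm]
      rw [hQsum, map_zero] at hmain
      exact hmain
    exact Or.resolve_left (mul_eq_zero.mp key) hDfull0

end


section
variable {σ ι : Type}
local notation "RR" => MvPolynomial σ ℝ
local notation "KK" => FractionRing (MvPolynomial σ ℝ)

lemma eval_of_aeval_frac (g : MvPolynomial ι ℝ) (N D : ι → MvPolynomial σ ℝ) (x : σ → ℝ)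
    (hD : ∀ i, eval x (D i) ≠ 0)
    (h : aeval (fun i => algebraMap RR KK (N i) / algebraMap RR KK (D i)) g = 0) :
    eval (fun i => eval x (N i) / eval x (D i)) g = 0 := by
  classical
  set S : Submonoid RR := Submonoid.comap ((eval x : RR →+* ℝ)) (nonZeroDivisors ℝ) with hS
  have hmemS : ∀ p : RR, p ∈ S ↔ eval x p ≠ 0 := by
    intro p
    rw [hS, Submonoid.mem_comap, mem_nonZeroDivisors_iff_ne_zero]
  have hS0 : ∀ s : S, (s : RR) ≠ 0 := by
    rintro ⟨s, hs⟩ rfl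
    exact (hmemS 0).1 hs (by simp)
  have hunit_e : ∀ s : S, IsUnit ((eval x : RR →+* ℝ) (s : RR)) :=
    fun s => isUnit_iff_ne_zero.2 ((hmemS s).1 s.2)
  have hunit_j : ∀ s : S, IsUnit (algebraMap RR KK (s : RR)) := fun s =>
    isUnit_iff_ne_zero.2 fun h0 => hS0 s (IsFractionRing.injective RR KK (by rw [h0, map_zero]))
  set e : Localization S →+* ℝ := IsLocalization.lift hunit_e with he
  set j : Localization S →+* KK := IsLocalization.lift hunit_j with hj
  have hjinj : ∀ z : Localization S, j z = 0 → z = 0 := by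
    intro z hz
    obtain ⟨⟨p, s⟩, hps⟩ := IsLocalization.mk'_surjective S z
    dsimp only at hps
    rw [← hps] at hz ⊢
    rw [IsLocalization.lift_mk'_spec] at hz
    rw [mul_zero] at hz
    have hp : p = 0 := IsFractionRing.injective RR KK (by rw [hz, map_zero])
    rw [hp, IsLocalization.mk'_zero]
  have hDS : ∀ i, D i ∈ S := fun i => (hmemS (D i)).2 (hD i)
  set f' : ι → Localization S := fun i => IsLocalization.mk' _ (N i) ⟨D i, hDS i⟩ with hf'
  have hDK : ∀ i, algebraMap RR KK (D i) ≠ 0 := fun i h0 => hD i (by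
    rw [IsFractionRing.injective RR KK (h0.trans (map_zero _).symm), map_zero])
  have hjf : ∀ i, j (f' i) = algebraMap RR KK (N i) / algebraMap RR KK (D i) := by
    intro i
    rw [hf', hj, IsLocalization.lift_mk'_spec]
    exact (mul_div_cancel₀ _ (hDK i)).symm
  set z : Localization S := eval₂ ((algebraMap RR (Localization S)).comp MvPolynomial.C) f' g
    with hz
  have hjz : j z = 0 := by
    rw [hz, eval₂_comp_left j]
    have h1 : j.comp ((algebraMap RR (Localization S)).comp MvPolynomial.C)
        = algebraMap ℝ KK := by
      ext r
      simp only [RingHom.coe_comp, Function.comp_apply]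
      rw [hj, IsLocalization.lift_eq]
      rw [← MvPolynomial.algebraMap_eq, ← IsScalarTower.algebraMap_apply]
    have h2 : j ∘ f' = fun i => algebraMap RR KK (N i) / algebraMap RR KK (D i) :=
      funext hjf
    rw [h1, h2, ← aeval_def, h]
  have hz0 : z = 0 := hjinj z hjz
  have hev : eval (fun i => eval x (N i) / eval x (D i)) g = e z := by
    rw [hz, eval₂_comp_left e]
    have h1 : e.comp ((algebraMap RR (Localization S)).comp MvPolynomial.C)
        = RingHom.id ℝ := by
      ext r
      simp only [RingHom.coe_comp, Function.comp_apply, RingHom.id_apply]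
      rw [he, IsLocalization.lift_eq]
      simp
    have h2 : e ∘ f' = fun i => eval x (N i) / eval x (D i) := by
      funext i
      simp only [Function.comp_apply, hf', he]
      rw [IsLocalization.lift_mk'_spec]
      
      rw [mul_div_cancel₀ _ (hD i)]
    rw [h1, h2]
    rfl
  rw [hev, hz0, map_zero]

end

lemma cross_transform (w0 w1 a0 a1 c0 c1 : ℝ) (hW : w0^2 + w1^2 ≠ 0) :
    ((a0*w0+a1*w1)/(w0^2+w1^2)) * ((c1*w0-c0*w1)/(w0^2+w1^2))
      - ((a1*w0-a0*w1)/(w0^2+w1^2)) * ((c0*w0+c1*w1)/(w0^2+w1^2))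
    = (a0*c1 - a1*c0)/(w0^2+w1^2) := by
  field_simp
  ring

lemma normsq_transform (w0 w1 a0 a1 : ℝ) (hW : w0^2 + w1^2 ≠ 0) :
    ((a0*w0+a1*w1)/(w0^2+w1^2))^2 + ((a1*w0-a0*w1)/(w0^2+w1^2))^2
    = (a0^2+a1^2)/(w0^2+w1^2) := by
  field_simp
  ring

lemma div_ratio (cr na nc W : ℝ) (hW : W ≠ 0) (hna : na ≠ 0) (hnc : nc ≠ 0) :
    (cr/W)^2/((na/W)*(nc/W)) = cr^2/(na*nc) := by
  field_simp


lemma coordsq_pos (u : EuclideanSpace ℝ (Fin 2)) (hu : u ≠ 0) : 0 < u 0 ^ 2 + u 1 ^ 2 := by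
  have h : u 0 ≠ 0 ∨ u 1 ≠ 0 := by
    by_contra h
    push_neg at h
    exact hu (by ext i; fin_cases i <;> simp [h.1, h.2])
  rcases h with h | h
  · have h0 : 0 < |u 0| := abs_pos.2 h
    nlinarith [sq_abs (u 0), sq_nonneg (u 1)]
  · have h0 : 0 < |u 1| := abs_pos.2 h
    nlinarith [sq_abs (u 1), sq_nonneg (u 0)]

lemma sin_sq_angle (A B C : EuclideanSpace ℝ (Fin 2)) (hAB : A ≠ B) (hCB : C ≠ B) :
    Real.sin (EuclideanGeometry.angle A B C) ^ 2 =
      ((A 0 - B 0) * (C 1 - B 1) - (A 1 - B 1) * (C 0 - B 0)) ^ 2 /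
      (((A 0 - B 0) ^ 2 + (A 1 - B 1) ^ 2) * ((C 0 - B 0) ^ 2 + (C 1 - B 1) ^ 2)) := by
  have hang : EuclideanGeometry.angle A B C = InnerProductGeometry.angle (A - B) (C - B) := by
    rw [EuclideanGeometry.angle, vsub_eq_sub, vsub_eq_sub]
  set u : EuclideanSpace ℝ (Fin 2) := A - B with hu
  set v : EuclideanSpace ℝ (Fin 2) := C - B with hv
  have hu0 : u ≠ 0 := sub_ne_zero.2 hAB
  have hv0 : v ≠ 0 := sub_ne_zero.2 hCB
  have hcu : ∀ i, u i = A i - B i := fun i => rfl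
  have hcv : ∀ i, v i = C i - B i := fun i => rfl
  have hip : (inner ℝ u v : ℝ) = u 0 * v 0 + u 1 * v 1 := by
    simp [PiLp.inner_apply, RCLike.inner_apply, Fin.sum_univ_two, mul_comm]
  have hnu : ‖u‖ ^ 2 = u 0 ^ 2 + u 1 ^ 2 := by
    rw [EuclideanSpace.real_norm_sq_eq, Fin.sum_univ_two]
  have hnv : ‖v‖ ^ 2 = v 0 ^ 2 + v 1 ^ 2 := by
    rw [EuclideanSpace.real_norm_sq_eq, Fin.sum_univ_two]
  have hupos := coordsq_pos u hu0
  have hvpos := coordsq_pos v hv0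
  have hnu0 : ‖u‖ ≠ 0 := norm_ne_zero_iff.2 hu0
  have hnv0 : ‖v‖ ≠ 0 := norm_ne_zero_iff.2 hv0
  rw [hang, Real.sin_sq, InnerProductGeometry.cos_angle, div_pow, mul_pow, hnu, hnv, hip]
  have key : ∀ x0 x1 y0 y1 : ℝ, 0 < x0 ^ 2 + x1 ^ 2 → 0 < y0 ^ 2 + y1 ^ 2 →
      1 - (x0 * y0 + x1 * y1) ^ 2 / ((x0 ^ 2 + x1 ^ 2) * (y0 ^ 2 + y1 ^ 2))
      = (x0 * y1 - x1 * y0) ^ 2 / ((x0 ^ 2 + x1 ^ 2) * (y0 ^ 2 + y1 ^ 2)) := by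
    intro x0 x1 y0 y1 h1 h2
    field_simp
    ring
  exact key (u 0) (u 1) (v 0) (v 1) hupos hvpos


/-- for `m ≥ 2`, `n = 2m-3`, there is a non-zero polynomial `g`
in `n` variables vanishing on `(sin² θ₁, …, sin² θₙ)` for every `n`-tuple of
angles in `(0, π)` realised by some `m` points in the plane. -/
theorem statement10 (m n : ℕ) (hm : 2 ≤ m) (hn : n = 2 * m - 3) :
    ∃ g : MvPolynomial (Fin n) ℝ, g ≠ 0 ∧
      ∀ (P : Finset (EuclideanSpace ℝ (Fin 2))), P.card = m →
        ∀ θ : Fin n → ℝ, (∀ i, θ i ∈ Set.Ioo 0 Real.pi) →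
          (∀ i, Realises (P : Set (EuclideanSpace ℝ (Fin 2))) (θ i)) →
          MvPolynomial.eval (fun i => Real.sin (θ i) ^ 2) g = 0 := by
  classical
  haveI : NeZero m := ⟨by omega⟩
  have hcardsub : Fintype.card {j : Fin m // 2 ≤ (j : ℕ)} = m - 2 := by
    have e : {j : Fin m // 2 ≤ (j : ℕ)} ≃ Fin (m - 2) :=
      { toFun := fun j => ⟨j.1.1 - 2, by have := j.1.2; omega⟩
        invFun := fun i => ⟨⟨(i : ℕ) + 2, by have := i.2; omega⟩, by simp⟩
        left_inv := by
          rintro ⟨⟨jv, hj⟩, h2⟩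
          have h2' : 2 ≤ jv := h2
          apply Subtype.ext
          apply Fin.ext
          show jv - 2 + 2 = jv
          omega
        right_inv := by rintro ⟨iv, hi⟩; ext; simp }
    rw [Fintype.card_congr e, Fintype.card_fin]
  have hcards : Fintype.card ({j : Fin m // 2 ≤ (j : ℕ)} × Fin 2)
      < Fintype.card (Fin n) := by
    rw [Fintype.card_prod, hcardsub, Fintype.card_fin, Fintype.card_fin]
    omega
  set coord : Fin m → Fin 2 → MvPolynomial ({j : Fin m // 2 ≤ (j : ℕ)} × Fin 2) ℝ :=
    fun j c => if h : 2 ≤ (j : ℕ) then MvPolynomial.X (⟨j, h⟩, c)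
      else if (j : ℕ) = 0 then 0 else (if c = 0 then 1 else 0) with hcoord
  set Np : (Fin n → Fin m × Fin m × Fin m) → Fin n →
      MvPolynomial ({j : Fin m // 2 ≤ (j : ℕ)} × Fin 2) ℝ := fun τ i =>
    ((coord (τ i).1 0 - coord (τ i).2.1 0) * (coord (τ i).2.2 1 - coord (τ i).2.1 1)
      - (coord (τ i).1 1 - coord (τ i).2.1 1) * (coord (τ i).2.2 0 - coord (τ i).2.1 0))^2
    with hNp
  set Dp : (Fin n → Fin m × Fin m × Fin m) → Fin n →
      MvPolynomial ({j : Fin m // 2 ≤ (j : ℕ)} × Fin 2) ℝ := fun τ i =>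
    ((coord (τ i).1 0 - coord (τ i).2.1 0)^2 + (coord (τ i).1 1 - coord (τ i).2.1 1)^2) *
    ((coord (τ i).2.2 0 - coord (τ i).2.1 0)^2 + (coord (τ i).2.2 1 - coord (τ i).2.1 1)^2)
    with hDp
  have hgg : ∀ τ : Fin n → Fin m × Fin m × Fin m, ∃ g : MvPolynomial (Fin n) ℝ, g ≠ 0 ∧
      MvPolynomial.aeval (fun i =>
        algebraMap (MvPolynomial ({j : Fin m // 2 ≤ (j : ℕ)} × Fin 2) ℝ)
          (FractionRing (MvPolynomial ({j : Fin m // 2 ≤ (j : ℕ)} × Fin 2) ℝ)) (Np τ i)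
        / algebraMap (MvPolynomial ({j : Fin m // 2 ≤ (j : ℕ)} × Fin 2) ℝ)
          (FractionRing (MvPolynomial ({j : Fin m // 2 ≤ (j : ℕ)} × Fin 2) ℝ)) (Dp τ i))
        g = 0 :=
    fun τ => exists_annihilating hcards _
  choose gg hgg0 hggrel using hgg
  refine ⟨∏ τ : Fin n → Fin m × Fin m × Fin m, gg τ,
    Finset.prod_ne_zero_iff.2 fun τ _ => hgg0 τ, ?_⟩
  intro P hP θ hθIoo hθ
  set q : Fin m → EuclideanSpace ℝ (Fin 2) :=
    fun j => ↑(P.equivFin.symm (Fin.cast hP.symm j)) with hq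
  have hqmem : ∀ j, q j ∈ P := fun j => (P.equivFin.symm _).2
  have hqinj : Function.Injective q := by
    intro j j' h
    have h2 : P.equivFin.symm (Fin.cast hP.symm j) = P.equivFin.symm (Fin.cast hP.symm j') :=
      Subtype.coe_injective h
    have h3 := P.equivFin.symm.injective h2
    simpa [Fin.ext_iff] using congrArg Fin.val h3
  have hqsur : ∀ p ∈ P, ∃ j, q j = p := by
    intro p hp
    refine ⟨Fin.cast hP (P.equivFin ⟨p, hp⟩), ?_⟩
    simp [hq]
  choose A B C hA hB hC hABne hCBne hang using hθ
  choose a ha using fun i => hqsur (A i) (Finset.mem_coe.1 (hA i))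
  choose b hb using fun i => hqsur (B i) (Finset.mem_coe.1 (hB i))
  choose c hc using fun i => hqsur (C i) (Finset.mem_coe.1 (hC i))
  set τ0 : Fin n → Fin m × Fin m × Fin m := fun i => (a i, b i, c i) with hτ0
  rw [map_prod]
  apply Finset.prod_eq_zero (Finset.mem_univ τ0)
  set w0 : ℝ := q 1 0 - q 0 0 with hw0
  set w1 : ℝ := q 1 1 - q 0 1 with hw1
  have h01 : (1 : Fin m) ≠ 0 := by
    have h1m : 1 < m := by omega
    simp [Fin.ext_iff, Fin.val_one', Nat.mod_eq_of_lt h1m]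
  have hq10 : q 1 ≠ q 0 := fun h => h01 (hqinj h)
  have hW : w0^2 + w1^2 ≠ 0 := by
    have hpos := coordsq_pos (q 1 - q 0) (sub_ne_zero.2 hq10)
    exact fun h => hpos.ne' h
  set ψ : Fin m → Fin 2 → ℝ := fun j d =>
    if d = 0 then ((q j 0 - q 0 0)*w0 + (q j 1 - q 0 1)*w1)/(w0^2+w1^2)
    else ((q j 1 - q 0 1)*w0 - (q j 0 - q 0 0)*w1)/(w0^2+w1^2) with hψ
  set xs : ({j : Fin m // 2 ≤ (j : ℕ)} × Fin 2) → ℝ := fun s => ψ s.1.1 s.2 with hxs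
  have hevalcoord : ∀ j d, MvPolynomial.eval xs (coord j d) = ψ j d := by
    intro j d
    by_cases h2 : 2 ≤ (j : ℕ)
    · simp [hcoord, h2, hxs]
    · have h01' : (j : ℕ) = 0 ∨ (j : ℕ) = 1 := by omega
      rcases h01' with h0 | h1
      · have hj : j = 0 := by
          ext
          simpa using h0
        subst hj
        fin_cases d <;>
          simp [hcoord, h2, h0, hψ] <;> ring_nf
      · have hj1 : j = 1 := by
          apply Fin.ext
          rw [Fin.val_one', Nat.mod_eq_of_lt (by omega : 1 < m), h1]
        have hj0 : ¬ (j : ℕ) = 0 := by omega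
        rw [hcoord]
        simp only [dif_neg h2, if_neg hj0]
        rw [hj1]
        by_cases hd : d = 0
        · rw [if_pos hd, map_one, hψ]
          simp only [hd, eq_self_iff_true, if_true]
          rw [eq_comm, div_eq_one_iff_eq hW]
          ring
        · rw [if_neg hd, map_zero, hψ]
          simp only [if_neg hd]
          rw [eq_comm, div_eq_zero_iff]
          left
          ring
  have hdiff0 : ∀ j j', ψ j 0 - ψ j' 0
      = ((q j 0 - q j' 0)*w0 + (q j 1 - q j' 1)*w1)/(w0^2+w1^2) := by
    intro j j'
    simp only [hψ, if_pos rfl]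
    rw [div_sub_div_same]
    congr 1
    ring
  have hdiff1 : ∀ j j', ψ j 1 - ψ j' 1
      = ((q j 1 - q j' 1)*w0 - (q j 0 - q j' 0)*w1)/(w0^2+w1^2) := by
    intro j j'
    have hne : (1 : Fin 2) ≠ 0 := by decide
    simp only [hψ, if_neg hne]
    rw [div_sub_div_same]
    congr 1
    ring
  have hvalN : ∀ i, MvPolynomial.eval xs (Np τ0 i)
      = ((ψ (a i) 0 - ψ (b i) 0) * (ψ (c i) 1 - ψ (b i) 1)
         - (ψ (a i) 1 - ψ (b i) 1) * (ψ (c i) 0 - ψ (b i) 0))^2 := by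
    intro i
    simp [hNp, hτ0, hevalcoord, map_sub, map_add, map_mul, map_pow]
  have hvalD : ∀ i, MvPolynomial.eval xs (Dp τ0 i)
      = ((ψ (a i) 0 - ψ (b i) 0)^2 + (ψ (a i) 1 - ψ (b i) 1)^2)
        * ((ψ (c i) 0 - ψ (b i) 0)^2 + (ψ (c i) 1 - ψ (b i) 1)^2) := by
    intro i
    simp [hDp, hτ0, hevalcoord, map_sub, map_add, map_mul, map_pow]
  have hna : ∀ i, (A i 0 - B i 0)^2 + (A i 1 - B i 1)^2 ≠ 0 := fun i =>
    (coordsq_pos (A i - B i) (sub_ne_zero.2 (hABne i))).ne'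
  have hnc : ∀ i, (C i 0 - B i 0)^2 + (C i 1 - B i 1)^2 ≠ 0 := fun i =>
    (coordsq_pos (C i - B i) (sub_ne_zero.2 (hCBne i))).ne'
  have hDne : ∀ i, MvPolynomial.eval xs (Dp τ0 i) ≠ 0 := by
    intro i
    rw [hvalD i, hdiff0 (a i) (b i), hdiff1 (a i) (b i), hdiff0 (c i) (b i),
      hdiff1 (c i) (b i), ha i, hb i, hc i,
      normsq_transform _ _ _ _ hW, normsq_transform _ _ _ _ hW]
    exact mul_ne_zero (div_ne_zero (hna i) hW) (div_ne_zero (hnc i) hW)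
  have hval : ∀ i, Real.sin (θ i) ^ 2
      = MvPolynomial.eval xs (Np τ0 i) / MvPolynomial.eval xs (Dp τ0 i) := by
    intro i
    have hsin := sin_sq_angle (A i) (B i) (C i) (hABne i) (hCBne i)
    rw [hang i] at hsin
    rw [hvalN i, hvalD i, hdiff0 (a i) (b i), hdiff1 (a i) (b i), hdiff0 (c i) (b i),
      hdiff1 (c i) (b i), ha i, hb i, hc i,
      cross_transform _ _ _ _ _ _ hW,
      normsq_transform _ _ _ _ hW, normsq_transform _ _ _ _ hW,
      div_ratio _ _ _ _ hW (hna i) (hnc i)]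
    exact hsin
  have hmain := eval_of_aeval_frac (gg τ0) (Np τ0) (Dp τ0) xs hDne (hggrel τ0)
  have hfun : (fun i => Real.sin (θ i) ^ 2)
      = fun i => MvPolynomial.eval xs (Np τ0 i) / MvPolynomial.eval xs (Dp τ0 i) :=
    funext hval
  rw [hfun]
  exact hmain
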